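/- arXiv:2308.14142 — 3 statements merged into one kernel-verified Lean document; each statement's English description precedes it below -/
import Mathlib

section
/- If s : ℝ → ℝ is nonnegative and satisfies |d/dξ s(ξ)| ≤ 2L·√(s(ξ)) for all ξ (for some L > 0), then the function ξ ↦ √(s(ξ)) is L-Lipschitz, i.e. |√(s(ξ)) - √(s(ξ'))| ≤ L|ξ - ξ'| for all ξ, ξ'. -/
lemma sqrt_add_le_aux {a ε : ℝ} (ha : 0 ≤ a) (hε : 0 ≤ ε) :
    Real.sqrt (a + ε) ≤ Real.sqrt a + Real.sqrt ε := by
  have h : a + ε ≤ (Real.sqrt a + Real.sqrt ε) ^ 2 := by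
    have h1 : Real.sqrt a ^ 2 = a := Real.sq_sqrt ha
    have h2 : Real.sqrt ε ^ 2 = ε := Real.sq_sqrt hε
    nlinarith [Real.sqrt_nonneg a, Real.sqrt_nonneg ε]
  calc Real.sqrt (a + ε) ≤ Real.sqrt ((Real.sqrt a + Real.sqrt ε) ^ 2) :=
        Real.sqrt_le_sqrt h
    _ = Real.sqrt a + Real.sqrt ε := by
        rw [Real.sqrt_sq (by positivity)]

theorem sqrt_spectral_density_lipschitz
    (s : ℝ → ℝ) (L : ℝ) (hL : 0 < L)
    (hs_nonneg : ∀ ξ, 0 ≤ s ξ)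
    (hs_diff : Differentiable ℝ s)
    (hderiv : ∀ ξ, |deriv s ξ| ≤ 2 * L * Real.sqrt (s ξ)) :
    ∀ ξ ξ' : ℝ, |Real.sqrt (s ξ) - Real.sqrt (s ξ')| ≤ L * |ξ - ξ'| := by
  intro ξ ξ'
  have key : ∀ ε : ℝ, 0 < ε →
      |Real.sqrt (s ξ + ε) - Real.sqrt (s ξ' + ε)| ≤ L * |ξ - ξ'| := by
    intro ε hε
    set g : ℝ → ℝ := fun x => Real.sqrt (s x + ε) with hg
    set g' : ℝ → ℝ := fun x => deriv s x * (1 / (2 * Real.sqrt (s x + ε))) with hg'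
    have hpos : ∀ x, 0 < s x + ε := fun x =>
      add_pos_of_nonneg_of_pos (hs_nonneg x) hε
    have hd : ∀ x ∈ Set.univ, HasDerivWithinAt g (g' x) Set.univ x := by
      intro x _
      have h1 : HasDerivAt (fun x => s x + ε) (deriv s x) x :=
        ((hs_diff x).hasDerivAt).add_const ε
      have h2 := (Real.hasDerivAt_sqrt (ne_of_gt (hpos x))).comp x h1
      have : HasDerivAt g (g' x) x := by
        rw [show g' x = 1 / (2 * Real.sqrt (s x + ε)) * deriv s x by simp only [hg']; ring]
        exact h2
      exact this.hasDerivWithinAt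
    have hb : ∀ x ∈ Set.univ, ‖g' x‖ ≤ L := by
      intro x _
      have hr : 0 < Real.sqrt (s x + ε) := Real.sqrt_pos.mpr (hpos x)
      have hle : Real.sqrt (s x) ≤ Real.sqrt (s x + ε) :=
        Real.sqrt_le_sqrt (by linarith)
      have habs : |g' x| = |deriv s x| / (2 * Real.sqrt (s x + ε)) := by
        rw [hg', abs_mul, abs_of_pos (by positivity : (0:ℝ) < 1 / (2 * Real.sqrt (s x + ε)))]
        ring
      rw [Real.norm_eq_abs, habs, div_le_iff₀ (by positivity)]
      calc |deriv s x| ≤ 2 * L * Real.sqrt (s x) := hderiv x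
        _ ≤ 2 * L * Real.sqrt (s x + ε) := by nlinarith
        _ = L * (2 * Real.sqrt (s x + ε)) := by ring
    have := convex_univ.norm_image_sub_le_of_norm_hasDerivWithin_le hd hb
      (Set.mem_univ ξ') (Set.mem_univ ξ)
    simpa [Real.norm_eq_abs] using this
  -- pass to the limit ε → 0
  refine le_of_forall_pos_le_add ?_
  intro δ hδ
  have hε : (0:ℝ) < (δ / 2) ^ 2 := by positivity
  have hk := key ((δ / 2) ^ 2) hε
  set ε := (δ / 2) ^ 2 with hεdef
  have hsqrtε : Real.sqrt ε = δ / 2 := Real.sqrt_sq (by linarith)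
  have h1 : Real.sqrt (s ξ) ≤ Real.sqrt (s ξ + ε) :=
    Real.sqrt_le_sqrt (by linarith)
  have h2 : Real.sqrt (s ξ') ≤ Real.sqrt (s ξ' + ε) :=
    Real.sqrt_le_sqrt (by linarith)
  have h3 : Real.sqrt (s ξ + ε) ≤ Real.sqrt (s ξ) + δ / 2 := by
    have := sqrt_add_le_aux (hs_nonneg ξ) hε.le
    rwa [hsqrtε] at this
  have h4 : Real.sqrt (s ξ' + ε) ≤ Real.sqrt (s ξ') + δ / 2 := by
    have := sqrt_add_le_aux (hs_nonneg ξ') hε.le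
    rwa [hsqrtε] at this
  rw [abs_le] at hk ⊢ <;> constructor <;> [skip; skip] <;> linarith [hk.1, hk.2]
end

section
/- Let A be an n×n real positive semidefinite matrix and σ² > 0. Then log det(A + σ²I) - log det(B + σ²I) ≤ tr(A - B)/σ² for any positive semidefinite B with A - B positive semidefinite. -/
lemma aux_trace_eq {n : ℕ} {A : Matrix (Fin n) (Fin n) ℝ} (hA : A.IsHermitian) :
    A.trace = ∑ i, hA.eigenvalues i := by
  nth_rewrite 1 [hA.spectral_theorem]
  rw [Unitary.conjStarAlgAut_apply]
  rw [Matrix.trace_mul_cycle]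
  rw [show (star (hA.eigenvectorUnitary : Matrix (Fin n) (Fin n) ℝ)) *
      (hA.eigenvectorUnitary : Matrix (Fin n) (Fin n) ℝ) = 1 from
    Matrix.mem_unitaryGroup_iff'.mp hA.eigenvectorUnitary.2]
  simp [Matrix.trace_diagonal]

lemma aux_psd_smul {n : ℕ} {A : Matrix (Fin n) (Fin n) ℝ} {c : ℝ} (hc : 0 ≤ c)
    (hA : A.PosSemidef) : (c • A).PosSemidef := by
  refine Matrix.posSemidef_iff_dotProduct_mulVec.mpr ⟨?_, fun x => ?_⟩
  · have := hA.1.eq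
    unfold Matrix.IsHermitian
    rw [Matrix.conjTranspose_smul, this]
    simp
  · rw [Matrix.smul_mulVec, dotProduct_smul, smul_eq_mul]
    exact mul_nonneg hc (hA.dotProduct_mulVec_nonneg x)

lemma aux_pd_smul_one {n : ℕ} {c : ℝ} (hc : 0 < c) :
    (c • (1 : Matrix (Fin n) (Fin n) ℝ)).PosDef := by
  refine Matrix.posDef_iff_dotProduct_mulVec.mpr ⟨(aux_psd_smul hc.le Matrix.PosSemidef.one).1, fun x hx => ?_⟩
  rw [Matrix.smul_mulVec, dotProduct_smul, smul_eq_mul, Matrix.one_mulVec]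
  exact mul_pos hc (Matrix.dotProduct_star_self_pos_iff.mpr hx)

lemma aux_trace_nonneg {n : ℕ} {A : Matrix (Fin n) (Fin n) ℝ} (hA : A.PosSemidef) :
    0 ≤ A.trace := by
  rw [aux_trace_eq hA.1]
  exact Finset.sum_nonneg fun i _ => hA.eigenvalues_nonneg i
lemma aux_logdet_le {n : ℕ} {C : Matrix (Fin n) (Fin n) ℝ} (hC : C.PosSemidef) :
    Real.log (1 + C).det ≤ C.trace := by
  have hH : (1 + C).PosDef := Matrix.PosDef.add_posSemidef Matrix.PosDef.one hC
  have hHerm := hH.isHermitian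
  have hpos : ∀ i, 0 < hHerm.eigenvalues i := hH.eigenvalues_pos
  have hdet : (1 + C).det = ∏ i, hHerm.eigenvalues i := by
    simpa using hHerm.det_eq_prod_eigenvalues
  have htr : (1 + C).trace = (n : ℝ) + C.trace := by
    simp [Matrix.trace_add]
  have h1 : Real.log (1 + C).det = ∑ i, Real.log (hHerm.eigenvalues i) := by
    rw [hdet, Real.log_prod fun i _ => (hpos i).ne']
  have h2 : ∑ i, Real.log (hHerm.eigenvalues i) ≤ ∑ i, (hHerm.eigenvalues i - 1) :=
    Finset.sum_le_sum fun i _ => Real.log_le_sub_one_of_pos (hpos i)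
  have h3 : ∑ i, (hHerm.eigenvalues i - 1) = (1 + C).trace - n := by
    rw [Finset.sum_sub_distrib, ← aux_trace_eq hHerm]
    simp
  rw [h1]
  rw [h3] at h2
  rw [htr] at h2
  linarith
set_option maxHeartbeats 1000000 in
theorem logdet_diff_le_trace_div
    {n : ℕ} (A B : Matrix (Fin n) (Fin n) ℝ) (σ2 : ℝ) (hσ : 0 < σ2)
    (hA : A.PosSemidef) (hB : B.PosSemidef) (hAB : (A - B).PosSemidef) :
    Real.log (A + σ2 • (1 : Matrix (Fin n) (Fin n) ℝ)).det -
        Real.log (B + σ2 • (1 : Matrix (Fin n) (Fin n) ℝ)).det ≤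
      (A - B).trace / σ2 := by
  set D := A - B with hD
  set M := B + σ2 • (1 : Matrix (Fin n) (Fin n) ℝ) with hMdef
  have hM : M.PosDef := Matrix.PosDef.posSemidef_add hB (aux_pd_smul_one hσ)
  have hN : (A + σ2 • (1 : Matrix (Fin n) (Fin n) ℝ)).PosDef :=
    Matrix.PosDef.posSemidef_add hA (aux_pd_smul_one hσ)
  set S := (open scoped MatrixOrder in CFC.sqrt M) with hSdef
  have hS : S.PosSemidef := by open scoped MatrixOrder in exact Matrix.nonneg_iff_posSemidef.mp (CFC.sqrt_nonneg M)
  have hSS : S * S = M := by open scoped MatrixOrder in exact CFC.sqrt_mul_sqrt_self M hM.posSemidef.nonneg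
  have hdetS : S.det ≠ 0 := by
    intro h
    have : M.det = 0 := by rw [← hSS, Matrix.det_mul, h, zero_mul]
    exact hM.det_pos.ne' this
  have hSinv : S⁻¹.conjTranspose = S⁻¹ := by
    rw [Matrix.conjTranspose_nonsing_inv, hS.1.eq]
  set C := S⁻¹ * D * S⁻¹ with hCdef
  have hC : C.PosSemidef := by
    have := hAB.mul_mul_conjTranspose_same S⁻¹
    rwa [hSinv] at this
  have hSCS : S * C * S = D := by
    rw [hCdef]
    rw [show S * (S⁻¹ * D * S⁻¹) * S = (S * S⁻¹) * D * (S⁻¹ * S) by noncomm_ring]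
    rw [Matrix.mul_nonsing_inv _ (isUnit_iff_ne_zero.mpr hdetS), Matrix.nonsing_inv_mul _ (isUnit_iff_ne_zero.mpr hdetS), one_mul, mul_one]
  have hNeq : A + σ2 • (1 : Matrix (Fin n) (Fin n) ℝ) = S * (1 + C) * S := by
    rw [mul_add, add_mul, mul_one, hSS, hSCS, hMdef, hD]
    abel
  have hdet1C : (0:ℝ) < (1 + C).det := (Matrix.PosDef.add_posSemidef Matrix.PosDef.one hC).det_pos
  have hlog : Real.log (A + σ2 • (1 : Matrix (Fin n) (Fin n) ℝ)).det
      - Real.log M.det = Real.log (1 + C).det := by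
    rw [hNeq, Matrix.det_mul, Matrix.det_mul]
    rw [show S.det * (1 + C).det * S.det = (1 + C).det * (S.det * S.det) by ring]
    have hSSdet : S.det * S.det = M.det := by rw [← Matrix.det_mul, hSS]
    rw [hSSdet, Real.log_mul hdet1C.ne' hM.det_pos.ne']
    ring
  -- trace bound
  set T := (open scoped MatrixOrder in CFC.sqrt D) with hTdef
  have hT : T.PosSemidef := by open scoped MatrixOrder in exact Matrix.nonneg_iff_posSemidef.mp (CFC.sqrt_nonneg D)
  have hTT : T * T = D := by open scoped MatrixOrder in exact CFC.sqrt_mul_sqrt_self D hAB.nonneg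
  set X := σ2⁻¹ • (1 : Matrix (Fin n) (Fin n) ℝ) - S⁻¹ * S⁻¹ with hXdef
  have hXeq : X = σ2⁻¹ • (S⁻¹ * B * S⁻¹) := by
    have h1 : S⁻¹ * M * S⁻¹ = 1 := by
      rw [← hSS]
      rw [show S⁻¹ * (S * S) * S⁻¹ = (S⁻¹ * S) * (S * S⁻¹) by noncomm_ring]
      rw [Matrix.mul_nonsing_inv _ (isUnit_iff_ne_zero.mpr hdetS), Matrix.nonsing_inv_mul _ (isUnit_iff_ne_zero.mpr hdetS), one_mul]
    have h2 : S⁻¹ * B * S⁻¹ = 1 - σ2 • (S⁻¹ * S⁻¹) := by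
      have : B = M - σ2 • (1 : Matrix (Fin n) (Fin n) ℝ) := by rw [hMdef]; abel
      rw [this, mul_sub, sub_mul, h1]
      congr 1
      simp [Matrix.mul_smul, Matrix.smul_mul, Matrix.mul_one]
    rw [hXdef, h2, smul_sub, smul_smul, inv_mul_cancel₀ hσ.ne', one_smul]
  have hX : X.PosSemidef := by
    rw [hXeq]
    refine aux_psd_smul (inv_nonneg.mpr hσ.le) ?_
    have := hB.mul_mul_conjTranspose_same S⁻¹
    rwa [hSinv] at this
  have hTXT : (T * X * T).PosSemidef := by
    have := hX.mul_mul_conjTranspose_same T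
    rwa [hT.1.eq] at this
  have htrace : C.trace ≤ D.trace / σ2 := by
    have key : (T * X * T).trace = D.trace / σ2 - C.trace := by
      rw [hXdef, mul_sub, sub_mul, Matrix.trace_sub]
      congr 1
      · rw [Matrix.mul_smul, Matrix.smul_mul, Matrix.mul_one, Matrix.trace_smul, hTT,
          smul_eq_mul, div_eq_mul_inv, mul_comm]
      · rw [hCdef, ← hTT]
        rw [show S⁻¹ * (T * T) * S⁻¹ = (S⁻¹ * T) * (T * S⁻¹) by noncomm_ring]
        rw [show T * (S⁻¹ * S⁻¹) * T = (T * S⁻¹) * (S⁻¹ * T) by noncomm_ring]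
        exact (Matrix.trace_mul_comm _ _).symm
    have := aux_trace_nonneg hTXT
    rw [key] at this
    linarith
  have := aux_logdet_le hC
  rw [hlog]
  linarith
end

section
/- Let Σ_u(T) denote the optimal variational precision after transforming features by invertible T: if the optimal parameters for features u' are Σ_{u'}⁻¹ = K_{u'u'}⁻¹(K_{u'u'} + σ⁻²K_{u'f}K_{u'f}*)K_{u'u'}⁻¹ and μ_{u'} = σ⁻²Σ_{u'}K_{u'u'}⁻¹K_{u'f}y, then for u = Tu' the corresponding optimal parameters satisfy Σ_u⁻¹ = T⁻* Σ_{u'}⁻¹ T⁻¹ and μ_u = T μ_{u'}. -/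
open Matrix ComplexOrder

theorem optimal_variational_params_transform
    {M N : ℕ} (K' : Matrix (Fin M) (Fin M) ℂ) (hK' : K'.PosDef)
    (C' : Matrix (Fin M) (Fin N) ℂ)
    (T : Matrix (Fin M) (Fin M) ℂ) (hT : IsUnit T.det)
    (σ : ℝ) (hσ : 0 < σ) (y : Fin N → ℂ) :
    let Kuu := T * K' * Tᴴ
    let Kuf := T * C'
    let Sinv' := K'⁻¹ * (K' + ((σ : ℂ) ^ 2)⁻¹ • (C' * C'ᴴ)) * K'⁻¹
    let Sinv := Kuu⁻¹ * (Kuu + ((σ : ℂ) ^ 2)⁻¹ • (Kuf * Kufᴴ)) * Kuu⁻¹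
    let μ' := ((σ : ℂ) ^ 2)⁻¹ • (Sinv'⁻¹).mulVec ((K'⁻¹).mulVec (C'.mulVec y))
    let μ := ((σ : ℂ) ^ 2)⁻¹ • (Sinv⁻¹).mulVec ((Kuu⁻¹).mulVec (Kuf.mulVec y))
    Sinv = (Tᴴ)⁻¹ * Sinv' * T⁻¹ ∧ μ = T.mulVec μ' := by
  intro Kuu Kuf Sinv' Sinv μ' μ
  have hTH : IsUnit (Tᴴ).det := by rw [det_conjTranspose]; exact hT.star
  have hK : IsUnit K'.det := isUnit_iff_isUnit_det _ |>.1 hK'.isUnit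
  have hKuuinv : Kuu⁻¹ = (Tᴴ)⁻¹ * K'⁻¹ * T⁻¹ := by
    show (T * K' * Tᴴ)⁻¹ = _
    rw [Matrix.mul_inv_rev, Matrix.mul_inv_rev, Matrix.mul_assoc]
  have h1 : Kuu + ((σ : ℂ) ^ 2)⁻¹ • (Kuf * Kufᴴ)
      = T * (K' + ((σ : ℂ) ^ 2)⁻¹ • (C' * C'ᴴ)) * Tᴴ := by
    show T * K' * Tᴴ + ((σ : ℂ) ^ 2)⁻¹ • ((T * C') * (T * C')ᴴ) = _
    rw [conjTranspose_mul, Matrix.mul_add, Matrix.add_mul, Matrix.mul_smul,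
      Matrix.smul_mul]
    noncomm_ring
    simp [Matrix.mul_assoc]
  have key : Sinv = (Tᴴ)⁻¹ * Sinv' * T⁻¹ := by
    show Kuu⁻¹ * (Kuu + ((σ : ℂ) ^ 2)⁻¹ • (Kuf * Kufᴴ)) * Kuu⁻¹ = _
    rw [hKuuinv, h1]
    simp only [Matrix.mul_assoc, nonsing_inv_mul_cancel_left _ _ hT,
      mul_nonsing_inv_cancel_left _ _ hTH]
    simp only [Sinv', Matrix.mul_assoc]
  refine ⟨key, ?_⟩
  have hSinv' : IsUnit Sinv'.det := by
    have hKi : IsUnit K'⁻¹.det := by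
      rw [Matrix.det_nonsing_inv]; exact hK.ringInverse
    show IsUnit (K'⁻¹ * (K' + ((σ : ℂ) ^ 2)⁻¹ • (C' * C'ᴴ)) * K'⁻¹).det
    rw [Matrix.det_mul, Matrix.det_mul]
    have hmid : (K' + ((σ : ℂ) ^ 2)⁻¹ • (C' * C'ᴴ)).PosDef := by
      apply hK'.add_posSemidef
      have h0 := Matrix.posSemidef_self_mul_conjTranspose (((σ : ℂ))⁻¹ • C')
      have heq : ((σ : ℂ))⁻¹ • C' * ((σ : ℂ))⁻¹ • C'ᴴ
          = ((σ : ℂ) ^ 2)⁻¹ • (C' * C'ᴴ) := by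
        rw [Matrix.smul_mul, Matrix.mul_smul, smul_smul, ← mul_inv, ← sq]
      rw [conjTranspose_smul, Complex.star_def, Complex.conj_inv,
        Complex.conj_ofReal, heq] at h0
      exact h0
    exact (hKi.mul (isUnit_iff_isUnit_det _ |>.1 hmid.isUnit)).mul hKi
  have hSinvinv : Sinv⁻¹ = T * Sinv'⁻¹ * Tᴴ := by
    rw [key, Matrix.mul_inv_rev, Matrix.mul_inv_rev,
      Matrix.nonsing_inv_nonsing_inv _ hT, Matrix.nonsing_inv_nonsing_inv _ hTH,
      Matrix.mul_assoc]
  show ((σ : ℂ) ^ 2)⁻¹ • (Sinv⁻¹).mulVec ((Kuu⁻¹).mulVec (Kuf.mulVec y)) = _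
  rw [hSinvinv, hKuuinv]
  show _ = T.mulVec (((σ : ℂ) ^ 2)⁻¹ • (Sinv'⁻¹).mulVec ((K'⁻¹).mulVec (C'.mulVec y)))
  rw [Matrix.mulVec_smul]
  congr 1
  show (T * Sinv'⁻¹ * Tᴴ).mulVec (((Tᴴ)⁻¹ * K'⁻¹ * T⁻¹).mulVec ((T * C').mulVec y)) = _
  simp only [← Matrix.mulVec_mulVec, ← Matrix.mul_assoc, Matrix.mulVec_mulVec]
  rw [show T * Sinv'⁻¹ * Tᴴ * (Tᴴ)⁻¹ * K'⁻¹ * T⁻¹ * T * C'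
      = T * (Sinv'⁻¹ * (K'⁻¹ * C')) by
    rw [Matrix.mul_assoc (T * Sinv'⁻¹) Tᴴ, mul_nonsing_inv _ hTH, Matrix.mul_one,
      Matrix.mul_assoc _ _ T, nonsing_inv_mul _ hT, Matrix.mul_one]
    simp only [Matrix.mul_assoc]]
  simp [Matrix.mulVec_mulVec, Matrix.mul_assoc]
end
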